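/- Let A and B be nearly simple algebras over a field F, with unique non-trivial ideals I_A and I_B. Assume that: (i) every nonzero two-sided ideal of A ⊗ B contains a nonzero elementary tensor; (ii) every nonzero two-sided ideal of (A/I_A) ⊗ B contains a nonzero elementary tensor; (iii) every nonzero two-sided ideal of A ⊗ (B/I_B) contains a nonzero elementary tensor; and (iv) Z(A/I_A) ⊗ Z(B/I_B) is a field. Then every two-sided ideal of A ⊗ B is admissible. -/

import Mathlib

open TensorProduct

/-- `A` is nearly simple with unique non-trivial two-sided ideal `I`. -/
def IsNearlySimpleWith {A : Type*} [Ring A] (I : TwoSidedIdeal A) : Prop :=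
  I ≠ ⊥ ∧ I ≠ ⊤ ∧
    (∀ J : TwoSidedIdeal A, J ≠ ⊥ → J ≠ ⊤ → J = I) ∧
    (∃ x ∈ I, ∃ y ∈ I, x * y ≠ 0)

/-- The `F`-subspace of `A ⊗[F] B` spanned by elementary tensors `x ⊗ y` with `x ∈ S`
and `y ∈ T`. -/
def tmulSpan (F : Type*) {A B : Type*} [Field F] [Ring A] [Algebra F A] [Ring B]
    [Algebra F B] (S : Set A) (T : Set B) : Submodule F (A ⊗[F] B) :=
  Submodule.span F {t : A ⊗[F] B | ∃ x ∈ S, ∃ y ∈ T, t = x ⊗ₜ[F] y}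

/-- A two-sided ideal of `A ⊗[F] B` is admissible if it is `{0}`, `A ⊗ B`, `I_A ⊗ I_B`,
`I_A ⊗ B`, `A ⊗ I_B`, or `I_A ⊗ B + A ⊗ I_B`. -/
def Admissible (F : Type*) {A B : Type*} [Field F] [Ring A] [Algebra F A] [Ring B]
    [Algebra F B] (IA : TwoSidedIdeal A) (IB : TwoSidedIdeal B)
    (J : TwoSidedIdeal (A ⊗[F] B)) : Prop :=
  J = ⊥ ∨ J = ⊤ ∨
  (J : Set (A ⊗[F] B)) = ↑(tmulSpan F (IA : Set A) (IB : Set B)) ∨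
  (J : Set (A ⊗[F] B)) = ↑(tmulSpan F (IA : Set A) (Set.univ : Set B)) ∨
  (J : Set (A ⊗[F] B)) = ↑(tmulSpan F (Set.univ : Set A) (IB : Set B)) ∨
  (J : Set (A ⊗[F] B)) =
    ↑(tmulSpan F (IA : Set A) (Set.univ : Set B) ⊔ tmulSpan F (Set.univ : Set A) (IB : Set B))

section Aux

variable {F A B A₂ B₂ : Type*} [Field F] [Ring A] [Algebra F A] [Ring B] [Algebra F B]
  [Ring A₂] [Algebra F A₂] [Ring B₂] [Algebra F B₂]

lemma tsi_exists_ne_zero {R : Type*} [NonUnitalNonAssocRing R] (K : TwoSidedIdeal R)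
    (h : K ≠ ⊥) : ∃ x ∈ K, x ≠ 0 := by
  by_contra hc
  push_neg at hc
  exact h (by
    refine le_antisymm (fun x hx => ?_) bot_le
    rw [TwoSidedIdeal.mem_bot]
    exact hc x hx)

lemma mem_tmulSpan_of {S : Set A} {T : Set B} {x : A} {y : B} (hx : x ∈ S) (hy : y ∈ T) :
    x ⊗ₜ[F] y ∈ tmulSpan F S T :=
  Submodule.subset_span ⟨x, hx, y, hy, rfl⟩

/-- Apply a linear map to an element of `tmulSpan`, landing in a submodule,
provided generators land there. -/
lemma tmulSpan_apply_mem {C : Type*} [AddCommGroup C] [Module F C]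
    {S : Set A} {T : Set B} (f : A ⊗[F] B →ₗ[F] C) (p : Submodule F C)
    (hgen : ∀ x ∈ S, ∀ y ∈ T, f (x ⊗ₜ[F] y) ∈ p) {u : A ⊗[F] B}
    (hu : u ∈ tmulSpan F S T) : f u ∈ p := by
  induction hu using Submodule.span_induction with
  | mem t ht => obtain ⟨x, hx, y, hy, rfl⟩ := ht; exact hgen x hx y hy
  | zero => simp
  | add u v _ _ hu hv => rw [map_add]; exact p.add_mem hu hv
  | smul c u _ hu => rw [map_smul]; exact p.smul_mem c hu

/-- Membership of a `tmulSpan` in a two-sided ideal from generators. -/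
lemma tmulSpan_subset_tsi {S : Set A} {T : Set B} (J : TwoSidedIdeal (A ⊗[F] B))
    (hgen : ∀ x ∈ S, ∀ y ∈ T, x ⊗ₜ[F] y ∈ J) {u : A ⊗[F] B}
    (hu : u ∈ tmulSpan F S T) : u ∈ J := by
  induction hu using Submodule.span_induction with
  | mem t ht => obtain ⟨x, hx, y, hy, rfl⟩ := ht; exact hgen x hx y hy
  | zero => exact J.zero_mem
  | add u v _ _ hu hv => exact J.add_mem hu hv
  | smul c u _ hu =>
      rw [Algebra.smul_def]
      exact J.mul_mem_left _ _ hu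

/-- In a simple ring, every nonzero element generates everything as finite sums `sᵢ * a * tᵢ`. -/
lemma exists_list_of_simple {R : Type*} [Ring R]
    (hsimp : ∀ K : TwoSidedIdeal R, K = ⊥ ∨ K = ⊤) {a : R} (ha : a ≠ 0) (r : R) :
    ∃ l : List (R × R), (l.map fun p => p.1 * a * p.2).sum = r := by
  classical
  let S : TwoSidedIdeal R := TwoSidedIdeal.mk'
    {x | ∃ l : List (R × R), (l.map fun p => p.1 * a * p.2).sum = x}
    ⟨[], rfl⟩
    (by rintro x y ⟨l₁, rfl⟩ ⟨l₂, rfl⟩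
        exact ⟨l₁ ++ l₂, by simp⟩)
    (by rintro x ⟨l, rfl⟩
        refine ⟨l.map fun p => (-p.1, p.2), ?_⟩
        induction l with
        | nil => simp
        | cons h t ih =>
            simp only [List.map_cons, List.sum_cons, List.map_map] at ih ⊢
            rw [ih]; noncomm_ring)
    (by rintro x y ⟨l, rfl⟩
        refine ⟨l.map fun p => (x * p.1, p.2), ?_⟩
        induction l with
        | nil => simp
        | cons h t ih =>
            simp only [List.map_cons, List.sum_cons, List.map_map] at ih ⊢
            rw [show ((fun p : R × R => p.1 * a * p.2) ∘ fun p : R × R => (x * p.1, p.2)) = fun p : R × R => x * (p.1 * a * p.2) from funext fun p => by dsimp; noncomm_ring] at ih ⊢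
            rw [ih]; noncomm_ring)
    (by rintro x y ⟨l, rfl⟩
        refine ⟨l.map fun p => (p.1, p.2 * y), ?_⟩
        induction l with
        | nil => simp
        | cons h t ih =>
            simp only [List.map_cons, List.sum_cons, List.map_map] at ih ⊢
            rw [show ((fun p : R × R => p.1 * a * p.2) ∘ fun p : R × R => (p.1, p.2 * y)) = fun p : R × R => (p.1 * a * p.2) * y from funext fun p => by dsimp; noncomm_ring] at ih ⊢
            rw [ih]; noncomm_ring)
  have haS : a ∈ S := by
    rw [TwoSidedIdeal.mem_mk']
    exact ⟨[(1, 1)], by simp⟩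
  rcases hsimp S with h | h
  · exact absurd (by rwa [h, TwoSidedIdeal.mem_bot] at haS) ha
  · have : r ∈ S := h ▸ (TwoSidedIdeal.mem_top R)
    rwa [TwoSidedIdeal.mem_mk'] at this

end Aux
section Aux2
variable {F A B A₂ B₂ : Type*} [Field F] [Ring A] [Algebra F A] [Ring B] [Algebra F B]
  [Ring A₂] [Algebra F A₂] [Ring B₂] [Algebra F B₂]

lemma map_mem_tmulSpan (f : A →ₗ[F] A₂) (g : B →ₗ[F] B₂) {S : Set A₂} {T : Set B₂}
    (hf : ∀ a, f a ∈ S) (hg : ∀ b, g b ∈ T) (u : A ⊗[F] B) :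
    TensorProduct.map f g u ∈ tmulSpan F S T := by
  induction u with
  | zero => simp
  | tmul a b =>
      rw [TensorProduct.map_tmul]
      exact Submodule.subset_span ⟨f a, hf a, g b, hg b, rfl⟩
  | add u v hu hv => rw [map_add]; exact Submodule.add_mem _ hu hv

variable (qA : A →ₐ[F] A₂) (qB : B →ₐ[F] B₂) (IA : TwoSidedIdeal A) (IB : TwoSidedIdeal B)

/-- A linear retraction-style projection onto the kernel. -/
lemma exists_ker_proj (hsurj : Function.Surjective qA)
    (hker : ∀ x : A, qA x = 0 ↔ x ∈ IA) :
    ∃ (π : A →ₗ[F] A) (s : A₂ →ₗ[F] A), (∀ x, π x ∈ IA) ∧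
      π + s ∘ₗ qA.toLinearMap = LinearMap.id := by
  obtain ⟨s, hs⟩ := qA.toLinearMap.exists_rightInverse_of_surjective
    (LinearMap.range_eq_top.2 hsurj)
  refine ⟨LinearMap.id - s ∘ₗ qA.toLinearMap, s, fun x => ?_, by abel⟩
  rw [← hker]
  have : qA (s (qA x)) = qA x := congrFun (congrArg (DFunLike.coe) hs) (qA x)
  simp [this]

lemma ker_left_sub (hsurjA : Function.Surjective qA) (hkerA : ∀ x : A, qA x = 0 ↔ x ∈ IA)
    (u : A ⊗[F] B)
    (hu : TensorProduct.map qA.toLinearMap LinearMap.id u = 0) :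
    u ∈ tmulSpan F (IA : Set A) (Set.univ : Set B) := by
  obtain ⟨π, s, hπ, hid⟩ := exists_ker_proj qA IA hsurjA hkerA
  have key : TensorProduct.map π LinearMap.id u = u := by
    have hfun : TensorProduct.map π (LinearMap.id : B →ₗ[F] B)
        + TensorProduct.map (s ∘ₗ qA.toLinearMap) LinearMap.id = LinearMap.id := by
      rw [← TensorProduct.map_add_left, hid, TensorProduct.map_id]
    have h1 := congrFun (congrArg DFunLike.coe hfun) u
    simp only [LinearMap.add_apply, LinearMap.id_apply] at h1
    have hcomp : TensorProduct.map (s ∘ₗ qA.toLinearMap) (LinearMap.id : B →ₗ[F] B)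
        = (TensorProduct.map s LinearMap.id).comp
            (TensorProduct.map qA.toLinearMap LinearMap.id) := by
      rw [← TensorProduct.map_comp, LinearMap.id_comp]
    have h2 : TensorProduct.map (s ∘ₗ qA.toLinearMap) (LinearMap.id : B →ₗ[F] B) u = 0 := by
      rw [hcomp, LinearMap.comp_apply, hu, map_zero]
    rw [h2, add_zero] at h1
    exact h1
  rw [← key]
  exact map_mem_tmulSpan π LinearMap.id hπ (fun _ => Set.mem_univ _) u
end Aux2

section Stage1
variable {F : Type*} [Field F]

open Finsupp in
lemma stage1 {R S : Type*} [Ring R] [Algebra F R] [Ring S] [Algebra F S] [Nontrivial R]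
    (hsimp : ∀ K : TwoSidedIdeal R, K = ⊥ ∨ K = ⊤)
    (K : TwoSidedIdeal (R ⊗[F] S)) (hK : ∃ u ∈ K, u ≠ 0) :
    ∃ u ∈ K, u ≠ 0 ∧
      u ∈ tmulSpan F ((Subalgebra.center F R : Subalgebra F R) : Set R) (Set.univ : Set S) := by
  classical
  set b := Module.Basis.ofVectorSpace F S with hb
  set e : R ⊗[F] S ≃ₗ[F] (Module.Basis.ofVectorSpaceIndex F S →₀ R) :=
    (TensorProduct.congr (LinearEquiv.refl F R) b.repr).trans
      (TensorProduct.finsuppScalarRight F F R _) with he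
  have heval : ∀ (x : R) (s : S) i, e (x ⊗ₜ[F] s) i = (b.repr s i) • x := by
    intro x s i
    simp [he, TensorProduct.congr_tmul, TensorProduct.finsuppScalarRight_apply_tmul_apply]
  have hC1 : ∀ (r : R) (u : R ⊗[F] S) (i), e ((r ⊗ₜ[F] (1 : S)) * u) i = r * e u i := by
    intro r u
    induction u with
    | zero => simp
    | tmul a s =>
        intro i
        rw [show (r ⊗ₜ[F] (1 : S)) * (a ⊗ₜ[F] s) = (r * a) ⊗ₜ[F] s by
          simp [Algebra.TensorProduct.tmul_mul_tmul]]
        rw [heval, heval, mul_smul_comm]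
    | add u v hu hv =>
        intro i
        rw [mul_add, map_add, Finsupp.add_apply, hu i, hv i, map_add, Finsupp.add_apply,
          mul_add]
  have hC2 : ∀ (r : R) (u : R ⊗[F] S) (i), e (u * (r ⊗ₜ[F] (1 : S))) i = e u i * r := by
    intro r u
    induction u with
    | zero => simp
    | tmul a s =>
        intro i
        rw [show (a ⊗ₜ[F] s) * (r ⊗ₜ[F] (1 : S)) = (a * r) ⊗ₜ[F] s by
          simp [Algebra.TensorProduct.tmul_mul_tmul]]
        rw [heval, heval, smul_mul_assoc]
    | add u v hu hv =>
        intro i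
        rw [add_mul, map_add, Finsupp.add_apply, hu i, hv i, map_add, Finsupp.add_apply,
          add_mul]
  have hsingle : ∀ (i) (a : R), e (a ⊗ₜ[F] (b i)) = Finsupp.single i a := by
    intro i a
    ext j
    rw [heval, Module.Basis.repr_self, Finsupp.single_apply, Finsupp.single_apply]
    split <;> simp
  have hrepr : ∀ u : R ⊗[F] S, u = (e u).sum fun i a => a ⊗ₜ[F] (b i) := by
    intro u
    apply e.injective
    rw [map_finsuppSum]
    simp only [hsingle]
    exact (Finsupp.sum_single (e u)).symm
  -- minimal support
  have hP : ∃ n, ∃ u, (u ∈ K ∧ u ≠ 0) ∧ (e u).support.card = n := by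
    obtain ⟨u, hu, hne⟩ := hK
    exact ⟨_, u, ⟨hu, hne⟩, rfl⟩
  obtain ⟨u, ⟨huK, hune⟩, hcard⟩ := Nat.find_spec hP
  set n₀ := Nat.find hP with hn₀
  have hmin : ∀ v, v ∈ K → v ≠ 0 → n₀ ≤ (e v).support.card := by
    intro v hv hvne
    exact Nat.find_min' hP ⟨v, ⟨hv, hvne⟩, rfl⟩
  have heu_ne : e u ≠ 0 := fun h => hune (by
    have := congrArg e.symm h
    simpa using this)
  obtain ⟨i0, hi0⟩ : ∃ i, e u i ≠ 0 := by
    by_contra hc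
    push_neg at hc
    exact heu_ne (Finsupp.ext hc)
  obtain ⟨l, hl⟩ := exists_list_of_simple hsimp hi0 (1 : R)
  set u' := (l.map fun p => (p.1 ⊗ₜ[F] (1 : S)) * u * (p.2 ⊗ₜ[F] (1 : S))).sum with hu'def
  have hu'K : u' ∈ K :=
    K.listSum_mem l _ (fun p _ => K.mul_mem_right _ _ (K.mul_mem_left _ _ huK))
  have hcoeff_gen : ∀ (L : List (R × R)) (i),
      e ((L.map fun p => (p.1 ⊗ₜ[F] (1 : S)) * u * (p.2 ⊗ₜ[F] (1 : S))).sum) i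
        = (L.map fun p => p.1 * (e u i) * p.2).sum := by
    intro L
    induction L with
    | nil => intro i; simp
    | cons h t ih =>
        intro i
        simp only [List.map_cons, List.sum_cons, map_add, Finsupp.add_apply, ih i]
        congr 1
        rw [mul_assoc, hC1, hC2, mul_assoc]
  have hcoeff : ∀ i, e u' i = (l.map fun p => p.1 * (e u i) * p.2).sum := by
    intro i; rw [hu'def]; exact hcoeff_gen l i
  have he'i0 : e u' i0 = 1 := by rw [hcoeff, hl]
  have hu'ne : u' ≠ 0 := by
    intro h
    rw [h, map_zero] at he'i0
    simp only [Finsupp.zero_apply] at he'i0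
    exact one_ne_zero he'i0.symm
  have hsupp' : (e u').support ⊆ (e u).support := by
    intro i hi
    simp only [Finsupp.mem_support_iff] at hi ⊢
    intro h
    apply hi
    rw [hcoeff, h]
    simp
  have hcentral : ∀ i, e u' i ∈ Subalgebra.center F R := by
    intro i
    rw [Subalgebra.mem_center_iff]
    intro x
    have hv : (x ⊗ₜ[F] (1 : S)) * u' - u' * (x ⊗ₜ[F] (1 : S)) = 0 := by
      by_contra hv0
      have hvK : (x ⊗ₜ[F] (1 : S)) * u' - u' * (x ⊗ₜ[F] (1 : S)) ∈ K :=
        K.sub_mem (K.mul_mem_left _ _ hu'K) (K.mul_mem_right _ _ hu'K)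
      have hle := hmin _ hvK hv0
      have hco : ∀ j, e ((x ⊗ₜ[F] (1 : S)) * u' - u' * (x ⊗ₜ[F] (1 : S))) j
          = x * e u' j - e u' j * x := by
        intro j
        rw [map_sub, Finsupp.sub_apply, hC1, hC2]
      have hsub : (e ((x ⊗ₜ[F] (1 : S)) * u' - u' * (x ⊗ₜ[F] (1 : S)))).support
          ⊆ (e u).support.erase i0 := by
        intro j hj
        simp only [Finsupp.mem_support_iff, hco] at hj
        rw [Finset.mem_erase]
        constructor
        · intro hji0
          apply hj
          rw [hji0, he'i0, mul_one, one_mul, sub_self]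
        · by_contra hju
          apply hj
          have : e u' j = 0 := by
            by_contra h'
            exact hju (hsupp' (Finsupp.mem_support_iff.2 h'))
          rw [this, mul_zero, zero_mul, sub_self]
      have hcard2 := Finset.card_le_card hsub
      rw [Finset.card_erase_of_mem (Finsupp.mem_support_iff.2 hi0), hcard] at hcard2
      have hpos : 0 < (e u).support.card :=
        Finset.card_pos.2 ⟨i0, Finsupp.mem_support_iff.2 hi0⟩
      omega
    have := congrArg (fun t => e t i) hv
    simp only [map_sub, Finsupp.sub_apply, hC1, hC2, map_zero, Finsupp.zero_apply] at this
    exact sub_eq_zero.mp this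
  refine ⟨u', hu'K, hu'ne, ?_⟩
  rw [hrepr u']
  apply Submodule.sum_mem
  intro i _
  exact Submodule.subset_span ⟨e u' i, hcentral i, b i, trivial, rfl⟩

end Stage1

section Slices
variable {F A B : Type*} [Field F] [Ring A] [Algebra F A] [Ring B] [Algebra F B]

/-- Left slice: `{a | a ⊗ y ∈ J}`. -/
def leftSlice (J : TwoSidedIdeal (A ⊗[F] B)) (y : B) : TwoSidedIdeal A :=
  TwoSidedIdeal.mk' {a : A | a ⊗ₜ[F] y ∈ J}
    (by simpa [TensorProduct.zero_tmul] using J.zero_mem)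
    (fun {a b} ha hb => by
      simpa [TensorProduct.add_tmul] using J.add_mem ha hb)
    (fun {a} ha => by
      have : (-a) ⊗ₜ[F] y = -(a ⊗ₜ[F] y) := by simp [TensorProduct.neg_tmul]
      simpa [this] using J.neg_mem ha)
    (fun {x a} ha => by
      show (x * a) ⊗ₜ[F] y ∈ J
      have h : (x * a) ⊗ₜ[F] y = (x ⊗ₜ[F] (1 : B)) * (a ⊗ₜ[F] y) := by
        rw [Algebra.TensorProduct.tmul_mul_tmul, one_mul]
      rw [h]; exact J.mul_mem_left _ _ ha)
    (fun {a x} ha => by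
      show (a * x) ⊗ₜ[F] y ∈ J
      have h : (a * x) ⊗ₜ[F] y = (a ⊗ₜ[F] y) * (x ⊗ₜ[F] (1 : B)) := by
        rw [Algebra.TensorProduct.tmul_mul_tmul, mul_one]
      rw [h]; exact J.mul_mem_right _ _ ha)

lemma mem_leftSlice {J : TwoSidedIdeal (A ⊗[F] B)} {y : B} {a : A} :
    a ∈ leftSlice J y ↔ a ⊗ₜ[F] y ∈ J := by
  rw [leftSlice, TwoSidedIdeal.mem_mk']; rfl

/-- Right slice: `{b | x ⊗ b ∈ J}`. -/
def rightSlice (J : TwoSidedIdeal (A ⊗[F] B)) (x : A) : TwoSidedIdeal B :=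
  TwoSidedIdeal.mk' {b : B | x ⊗ₜ[F] b ∈ J}
    (by simpa [TensorProduct.tmul_zero] using J.zero_mem)
    (fun {a b} ha hb => by
      simpa [TensorProduct.tmul_add] using J.add_mem ha hb)
    (fun {a} ha => by
      have : x ⊗ₜ[F] (-a) = -(x ⊗ₜ[F] a) := by simp [TensorProduct.tmul_neg]
      simpa [this] using J.neg_mem ha)
    (fun {c a} ha => by
      show x ⊗ₜ[F] (c * a) ∈ J
      have h : x ⊗ₜ[F] (c * a) = ((1 : A) ⊗ₜ[F] c) * (x ⊗ₜ[F] a) := by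
        rw [Algebra.TensorProduct.tmul_mul_tmul, one_mul]
      rw [h]; exact J.mul_mem_left _ _ ha)
    (fun {a c} ha => by
      show x ⊗ₜ[F] (a * c) ∈ J
      have h : x ⊗ₜ[F] (a * c) = (x ⊗ₜ[F] a) * ((1 : A) ⊗ₜ[F] c) := by
        rw [Algebra.TensorProduct.tmul_mul_tmul, mul_one]
      rw [h]; exact J.mul_mem_right _ _ ha)

lemma mem_rightSlice {J : TwoSidedIdeal (A ⊗[F] B)} {x : A} {b : B} :
    b ∈ rightSlice J x ↔ x ⊗ₜ[F] b ∈ J := by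
  rw [rightSlice, TwoSidedIdeal.mem_mk']; rfl

end Slices

section Image

/-- Image of a two-sided ideal along a surjective ring hom. -/
def tsiImage {R R₂ : Type*} [Ring R] [Ring R₂] (f : R →+* R₂) (hf : Function.Surjective f)
    (J : TwoSidedIdeal R) : TwoSidedIdeal R₂ :=
  TwoSidedIdeal.mk' (f '' J)
    ⟨0, J.zero_mem, map_zero f⟩
    (by rintro _ _ ⟨a, ha, rfl⟩ ⟨b, hb, rfl⟩; exact ⟨a + b, J.add_mem ha hb, map_add f a b⟩)
    (by rintro _ ⟨a, ha, rfl⟩; exact ⟨-a, J.neg_mem ha, map_neg f a⟩)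
    (by rintro x _ ⟨a, ha, rfl⟩
        obtain ⟨w, rfl⟩ := hf x
        exact ⟨w * a, J.mul_mem_left _ _ ha, map_mul f w a⟩)
    (by rintro _ y ⟨a, ha, rfl⟩
        obtain ⟨w, rfl⟩ := hf y
        exact ⟨a * w, J.mul_mem_right _ _ ha, map_mul f a w⟩)

lemma mem_tsiImage {R R₂ : Type*} [Ring R] [Ring R₂] {f : R →+* R₂}
    {hf : Function.Surjective f} {J : TwoSidedIdeal R} {x : R₂} :
    x ∈ tsiImage f hf J ↔ ∃ j ∈ J, f j = x := by
  rw [tsiImage]; refine (TwoSidedIdeal.mem_mk' _ _ _ _ _ _ x).trans ?_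
  constructor
  · rintro ⟨a, ha, rfl⟩; exact ⟨a, ha, rfl⟩
  · rintro ⟨a, ha, rfl⟩; exact ⟨a, ha, rfl⟩

end Image

section Simple
variable {F : Type*} [Field F]

set_option maxHeartbeats 1600000 in
lemma tensor_simple {R S : Type*} [Ring R] [Algebra F R] [Ring S] [Algebra F S]
    [Nontrivial R] [Nontrivial S]
    (hsR : ∀ K : TwoSidedIdeal R, K = ⊥ ∨ K = ⊤)
    (hsS : ∀ K : TwoSidedIdeal S, K = ⊥ ∨ K = ⊤)
    (hfield : IsField ((Subalgebra.center F R) ⊗[F] (Subalgebra.center F S)))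
    (K : TwoSidedIdeal (R ⊗[F] S)) : K = ⊥ ∨ K = ⊤ := by
  by_cases hbot : K = ⊥
  · exact Or.inl hbot
  right
  obtain ⟨u1, hu1K, hu1ne, hu1span⟩ := stage1 hsR K (tsi_exists_ne_zero K hbot)
  let ZR := Subalgebra.center F R
  let ZS := Subalgebra.center F S
  let ιZ : ZR ⊗[F] S →ₐ[F] R ⊗[F] S :=
    Algebra.TensorProduct.map ZR.val (AlgHom.id F S)
  -- u1 is in the range of ιZ
  have hrange : ∀ v ∈ tmulSpan F (ZR : Set R) (Set.univ : Set S),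
      ∃ w : ZR ⊗[F] S, ιZ w = v := by
    intro v hv
    have : v ∈ LinearMap.range ιZ.toLinearMap := by
      refine Submodule.span_le.2 ?_ hv
      rintro _ ⟨x, hx, y, -, rfl⟩
      exact ⟨(⟨x, hx⟩ : ZR) ⊗ₜ[F] y, rfl⟩
    exact this
  obtain ⟨w1, hw1⟩ := hrange u1 hu1span
  let KZ : TwoSidedIdeal (ZR ⊗[F] S) := K.comap ιZ
  have hw1KZ : w1 ∈ KZ := by
    rw [TwoSidedIdeal.mem_comap]
    show ιZ w1 ∈ K
    rw [hw1]; exact hu1K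
  have hw1ne : w1 ≠ 0 := fun h => hu1ne (by rw [← hw1, h]; exact map_zero ιZ)
  -- transport to S ⊗ ZR and apply stage1 again
  let c : S ⊗[F] ZR ≃ₐ[F] ZR ⊗[F] S := Algebra.TensorProduct.comm F S ZR
  let K' : TwoSidedIdeal (S ⊗[F] ZR) := KZ.comap c.toAlgHom
  have hK'ne : ∃ w ∈ K', w ≠ 0 := by
    refine ⟨c.symm w1, ?_, fun h => hw1ne ?_⟩
    · rw [TwoSidedIdeal.mem_comap]
      show c (c.symm w1) ∈ KZ
      rw [c.apply_symm_apply]; exact hw1KZ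
    · have := congrArg c h
      rw [c.apply_symm_apply, map_zero] at this
      exact this
  obtain ⟨w, hwK', hwne, hwspan⟩ := stage1 hsS K' hK'ne
  have hw2KZ : c w ∈ KZ := (TwoSidedIdeal.mem_comap _).1 hwK'
  have hw2ne : c w ≠ 0 := fun h => hwne (by
    have := congrArg c.symm h
    rwa [c.symm_apply_apply, map_zero] at this)
  have hw2span : c w ∈ tmulSpan F (Set.univ : Set ZR) ((ZS : Subalgebra F S) : Set S) := by
    refine tmulSpan_apply_mem c.toLinearMap _ ?_ hwspan
    rintro x hx y -
    show c (x ⊗ₜ[F] y) ∈ _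
    rw [show c (x ⊗ₜ[F] y) = y ⊗ₜ[F] x from rfl]
    exact Submodule.subset_span ⟨y, trivial, x, hx, rfl⟩
  set v : R ⊗[F] S := ιZ (c w) with hv
  have hvK : v ∈ K := (TwoSidedIdeal.mem_comap _).1 hw2KZ
  have hvne : v ≠ 0 := by
    intro h
    apply hw2ne
    have hlin : ιZ.toLinearMap = LinearMap.rTensor S ZR.val.toLinearMap := by
      apply TensorProduct.ext'
      intro x y
      rfl
    have hinj : Function.Injective ιZ.toLinearMap := by
      rw [hlin]
      exact Module.Flat.rTensor_preserves_injective_linearMap _ Subtype.val_injective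
    exact hinj (by rw [show ιZ.toLinearMap (c w) = v from rfl, h, map_zero])
  have hvspan : v ∈ tmulSpan F ((ZR : Subalgebra F R) : Set R) ((ZS : Subalgebra F S) : Set S) := by
    refine tmulSpan_apply_mem ιZ.toLinearMap _ ?_ hw2span
    rintro x - y hy
    show ιZ (x ⊗ₜ[F] y) ∈ _
    have : ιZ (x ⊗ₜ[F] y) = (x : R) ⊗ₜ[F] y := rfl
    rw [this]
    exact Submodule.subset_span ⟨(x : R), x.2, y, hy, rfl⟩
  -- pull back to ZR ⊗ ZS and use that it is a field
  let ιZZ : ZR ⊗[F] ZS →ₐ[F] R ⊗[F] S := Algebra.TensorProduct.map ZR.val ZS.val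
  have : ∃ t : ZR ⊗[F] ZS, ιZZ t = v := by
    have : v ∈ LinearMap.range ιZZ.toLinearMap := by
      refine Submodule.span_le.2 ?_ hvspan
      rintro _ ⟨x, hx, y, hy, rfl⟩
      exact ⟨(⟨x, hx⟩ : ZR) ⊗ₜ[F] (⟨y, hy⟩ : ZS), rfl⟩
    exact this
  obtain ⟨t, ht⟩ := this
  have htne : t ≠ 0 := fun h => hvne (by rw [← ht, h]; exact map_zero ιZZ)
  obtain ⟨t', htt'⟩ := hfield.mul_inv_cancel htne
  have hone : (1 : R ⊗[F] S) ∈ K := by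
    have : v * ιZZ t' = 1 := by
      rw [← ht, ← map_mul, htt', map_one]
    rw [← this]
    exact K.mul_mem_right _ _ hvK
  exact TwoSidedIdeal.eq_top K hone

end Simple

section Kers
variable {F A B A₂ B₂ : Type*} [Field F] [Ring A] [Algebra F A] [Ring B] [Algebra F B]
  [Ring A₂] [Algebra F A₂] [Ring B₂] [Algebra F B₂]
variable (qA : A →ₐ[F] A₂) (qB : B →ₐ[F] B₂) (IA : TwoSidedIdeal A) (IB : TwoSidedIdeal B)

lemma ker_right_sub (hsurjB : Function.Surjective qB) (hkerB : ∀ y : B, qB y = 0 ↔ y ∈ IB)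
    (u : A ⊗[F] B)
    (hu : TensorProduct.map LinearMap.id qB.toLinearMap u = 0) :
    u ∈ tmulSpan F (Set.univ : Set A) (IB : Set B) := by
  obtain ⟨π, s, hπ, hid⟩ := exists_ker_proj qB IB hsurjB hkerB
  have key : TensorProduct.map LinearMap.id π u = u := by
    have hfun : TensorProduct.map (LinearMap.id : A →ₗ[F] A) π
        + TensorProduct.map LinearMap.id (s ∘ₗ qB.toLinearMap) = LinearMap.id := by
      rw [← TensorProduct.map_add_right, hid, TensorProduct.map_id]
    have h1 := congrFun (congrArg DFunLike.coe hfun) u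
    simp only [LinearMap.add_apply, LinearMap.id_apply] at h1
    have hcomp : TensorProduct.map (LinearMap.id : A →ₗ[F] A) (s ∘ₗ qB.toLinearMap)
        = (TensorProduct.map LinearMap.id s).comp
            (TensorProduct.map LinearMap.id qB.toLinearMap) := by
      rw [← TensorProduct.map_comp, LinearMap.id_comp]
    have h2 : TensorProduct.map (LinearMap.id : A →ₗ[F] A) (s ∘ₗ qB.toLinearMap) u = 0 := by
      rw [hcomp, LinearMap.comp_apply, hu, map_zero]
    rw [h2, add_zero] at h1
    exact h1
  rw [← key]
  exact map_mem_tmulSpan LinearMap.id π (fun _ => Set.mem_univ _) hπ u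

lemma ker_both (hsurjA : Function.Surjective qA) (hkerA : ∀ x : A, qA x = 0 ↔ x ∈ IA)
    (hsurjB : Function.Surjective qB) (hkerB : ∀ y : B, qB y = 0 ↔ y ∈ IB)
    (u : A ⊗[F] B)
    (hu1 : TensorProduct.map qA.toLinearMap LinearMap.id u = 0)
    (hu2 : TensorProduct.map LinearMap.id qB.toLinearMap u = 0) :
    u ∈ tmulSpan F (IA : Set A) (IB : Set B) := by
  obtain ⟨πA, sA, hπA, hidA⟩ := exists_ker_proj qA IA hsurjA hkerA
  obtain ⟨πB, sB, hπB, hidB⟩ := exists_ker_proj qB IB hsurjB hkerB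
  have keyA : TensorProduct.map πA LinearMap.id u = u := by
    have hfun : TensorProduct.map πA (LinearMap.id : B →ₗ[F] B)
        + TensorProduct.map (sA ∘ₗ qA.toLinearMap) LinearMap.id = LinearMap.id := by
      rw [← TensorProduct.map_add_left, hidA, TensorProduct.map_id]
    have h1 := congrFun (congrArg DFunLike.coe hfun) u
    simp only [LinearMap.add_apply, LinearMap.id_apply] at h1
    have hcomp : TensorProduct.map (sA ∘ₗ qA.toLinearMap) (LinearMap.id : B →ₗ[F] B)
        = (TensorProduct.map sA LinearMap.id).comp
            (TensorProduct.map qA.toLinearMap LinearMap.id) := by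
      rw [← TensorProduct.map_comp, LinearMap.id_comp]
    have h2 : TensorProduct.map (sA ∘ₗ qA.toLinearMap) (LinearMap.id : B →ₗ[F] B) u = 0 := by
      rw [hcomp, LinearMap.comp_apply, hu1, map_zero]
    rw [h2, add_zero] at h1
    exact h1
  have keyB : TensorProduct.map LinearMap.id πB u = u := by
    have hfun : TensorProduct.map (LinearMap.id : A →ₗ[F] A) πB
        + TensorProduct.map LinearMap.id (sB ∘ₗ qB.toLinearMap) = LinearMap.id := by
      rw [← TensorProduct.map_add_right, hidB, TensorProduct.map_id]
    have h1 := congrFun (congrArg DFunLike.coe hfun) u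
    simp only [LinearMap.add_apply, LinearMap.id_apply] at h1
    have hcomp : TensorProduct.map (LinearMap.id : A →ₗ[F] A) (sB ∘ₗ qB.toLinearMap)
        = (TensorProduct.map LinearMap.id sB).comp
            (TensorProduct.map LinearMap.id qB.toLinearMap) := by
      rw [← TensorProduct.map_comp, LinearMap.id_comp]
    have h2 : TensorProduct.map (LinearMap.id : A →ₗ[F] A) (sB ∘ₗ qB.toLinearMap) u = 0 := by
      rw [hcomp, LinearMap.comp_apply, hu2, map_zero]
    rw [h2, add_zero] at h1
    exact h1
  have hcomp2 : TensorProduct.map πA πB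
      = (TensorProduct.map πA LinearMap.id).comp
          (TensorProduct.map (LinearMap.id : A →ₗ[F] A) πB) := by
    rw [← TensorProduct.map_comp, LinearMap.comp_id, LinearMap.id_comp]
  have : TensorProduct.map πA πB u = u := by
    rw [hcomp2, LinearMap.comp_apply, keyB, keyA]
  rw [← this]
  exact map_mem_tmulSpan πA πB hπA hπB u

lemma ker_sum (hsurjA : Function.Surjective qA) (hkerA : ∀ x : A, qA x = 0 ↔ x ∈ IA)
    (hsurjB : Function.Surjective qB) (hkerB : ∀ y : B, qB y = 0 ↔ y ∈ IB)
    (u : A ⊗[F] B)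
    (hu : TensorProduct.map qA.toLinearMap qB.toLinearMap u = 0) :
    u ∈ tmulSpan F (IA : Set A) (Set.univ : Set B)
      ⊔ tmulSpan F (Set.univ : Set A) (IB : Set B) := by
  obtain ⟨πA, sA, hπA, hidA⟩ := exists_ker_proj qA IA hsurjA hkerA
  obtain ⟨πB, sB, hπB, hidB⟩ := exists_ker_proj qB IB hsurjB hkerB
  have h1 : TensorProduct.map πA LinearMap.id u
      + TensorProduct.map (sA ∘ₗ qA.toLinearMap) LinearMap.id u = u := by
    have hfun : TensorProduct.map πA (LinearMap.id : B →ₗ[F] B)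
        + TensorProduct.map (sA ∘ₗ qA.toLinearMap) LinearMap.id = LinearMap.id := by
      rw [← TensorProduct.map_add_left, hidA, TensorProduct.map_id]
    have := congrFun (congrArg DFunLike.coe hfun) u
    simpa only [LinearMap.add_apply, LinearMap.id_apply] using this
  set v := TensorProduct.map (sA ∘ₗ qA.toLinearMap) LinearMap.id u with hvdef
  have h2 : TensorProduct.map (LinearMap.id : A →ₗ[F] A) πB v
      + TensorProduct.map LinearMap.id (sB ∘ₗ qB.toLinearMap) v = v := by
    have hfun : TensorProduct.map (LinearMap.id : A →ₗ[F] A) πB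
        + TensorProduct.map LinearMap.id (sB ∘ₗ qB.toLinearMap) = LinearMap.id := by
      rw [← TensorProduct.map_add_right, hidB, TensorProduct.map_id]
    have := congrFun (congrArg DFunLike.coe hfun) v
    simpa only [LinearMap.add_apply, LinearMap.id_apply] using this
  have h3 : TensorProduct.map LinearMap.id (sB ∘ₗ qB.toLinearMap) v = 0 := by
    have hc1 : TensorProduct.map (LinearMap.id : A →ₗ[F] A) (sB ∘ₗ qB.toLinearMap)
        ∘ₗ TensorProduct.map (sA ∘ₗ qA.toLinearMap) (LinearMap.id : B →ₗ[F] B)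
        = TensorProduct.map (sA ∘ₗ qA.toLinearMap) (sB ∘ₗ qB.toLinearMap) := by
      rw [← TensorProduct.map_comp, LinearMap.comp_id, LinearMap.id_comp]
    have hc2 : TensorProduct.map (sA ∘ₗ qA.toLinearMap) (sB ∘ₗ qB.toLinearMap)
        = TensorProduct.map sA sB ∘ₗ TensorProduct.map qA.toLinearMap qB.toLinearMap := by
      rw [← TensorProduct.map_comp]
    have := congrFun (congrArg DFunLike.coe (hc1.trans hc2)) u
    simp only [LinearMap.comp_apply] at this
    rw [hvdef, this, hu, map_zero]
  rw [h3, add_zero] at h2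
  have hx1 : TensorProduct.map πA LinearMap.id u
      ∈ tmulSpan F (IA : Set A) (Set.univ : Set B) :=
    map_mem_tmulSpan πA LinearMap.id hπA (fun _ => Set.mem_univ _) u
  have hx2 : TensorProduct.map (LinearMap.id : A →ₗ[F] A) πB v
      ∈ tmulSpan F (Set.univ : Set A) (IB : Set B) :=
    map_mem_tmulSpan LinearMap.id πB (fun _ => Set.mem_univ _) hπB v
  rw [← h1, ← h2]
  exact Submodule.add_mem_sup hx1 hx2

end Kers

section Quot
variable {F A A₂ : Type*} [Field F] [Ring A] [Algebra F A] [Ring A₂] [Algebra F A₂]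

lemma nonzero_ge {IA : TwoSidedIdeal A}
    (huniq : ∀ J : TwoSidedIdeal A, J ≠ ⊥ → J ≠ ⊤ → J = IA)
    (K : TwoSidedIdeal A) (hK : K ≠ ⊥) : IA ≤ K := by
  rcases eq_or_ne K ⊤ with h | h
  · rw [h]; exact le_top
  · rw [← huniq K hK h]

lemma quot_simple (qA : A →ₐ[F] A₂) (hsurj : Function.Surjective qA)
    {IA : TwoSidedIdeal A} (hker : ∀ x : A, qA x = 0 ↔ x ∈ IA)
    (huniq : ∀ J : TwoSidedIdeal A, J ≠ ⊥ → J ≠ ⊤ → J = IA)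
    (K : TwoSidedIdeal A₂) : K = ⊥ ∨ K = ⊤ := by
  rcases eq_or_ne K ⊥ with h | h
  · exact Or.inl h
  right
  obtain ⟨x', hx'K, hx'ne⟩ := tsi_exists_ne_zero K h
  obtain ⟨a, rfl⟩ := hsurj x'
  set P : TwoSidedIdeal A := K.comap qA with hP
  have haP : a ∈ P := by rw [hP, TwoSidedIdeal.mem_comap]; exact hx'K
  have haIA : a ∉ IA := fun hc => hx'ne ((hker a).2 hc)
  have hPbot : P ≠ ⊥ := fun hc => haIA (by
    rw [hc, TwoSidedIdeal.mem_bot] at haP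
    rw [haP]
    exact IA.zero_mem)
  have hPtop : P = ⊤ := by
    by_contra hc
    exact haIA ((huniq P hPbot hc) ▸ haP)
  rw [eq_top_iff]
  intro y _
  obtain ⟨x, rfl⟩ := hsurj y
  have : x ∈ P := hPtop ▸ TwoSidedIdeal.mem_top A
  rwa [hP, TwoSidedIdeal.mem_comap] at this

lemma quot_nontrivial (qA : A →ₐ[F] A₂) {IA : TwoSidedIdeal A}
    (hker : ∀ x : A, qA x = 0 ↔ x ∈ IA) (hIAtop : IA ≠ ⊤) : Nontrivial A₂ := by
  refine ⟨1, 0, fun h => hIAtop ?_⟩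
  have h1 : (1 : A) ∈ IA := (hker 1).1 (by rw [map_one]; exact h)
  exact TwoSidedIdeal.eq_top IA h1

end Quot

section AlgMap
variable {F A B A₂ B₂ : Type*} [Field F] [Ring A] [Algebra F A] [Ring B] [Algebra F B]
  [Ring A₂] [Algebra F A₂] [Ring B₂] [Algebra F B₂]

lemma algMap_eq_linMap (f : A →ₐ[F] A₂) (g : B →ₐ[F] B₂) (u : A ⊗[F] B) :
    Algebra.TensorProduct.map f g u = TensorProduct.map f.toLinearMap g.toLinearMap u := by
  induction u with
  | zero => simp
  | tmul a b => simp [Algebra.TensorProduct.map_tmul, TensorProduct.map_tmul]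
  | add u v hu hv => rw [map_add, map_add, hu, hv]

lemma algMap_surj (f : A →ₐ[F] A₂) (g : B →ₐ[F] B₂) (hf : Function.Surjective f)
    (hg : Function.Surjective g) : Function.Surjective (Algebra.TensorProduct.map f g) := by
  intro z
  induction z with
  | zero => exact ⟨0, map_zero _⟩
  | tmul a' b' =>
      obtain ⟨a, rfl⟩ := hf a'
      obtain ⟨b, rfl⟩ := hg b'
      exact ⟨a ⊗ₜ[F] b, Algebra.TensorProduct.map_tmul f g a b⟩
  | add u v hu hv =>
      obtain ⟨x, rfl⟩ := hu
      obtain ⟨y, rfl⟩ := hv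
      exact ⟨x + y, map_add _ x y⟩

end AlgMap


set_option maxHeartbeats 1600000 in
/-- Let `A`, `B` be nearly simple algebras over `F` with unique non-trivial ideals
`I_A`, `I_B`, and let `A' = A/I_A`, `B' = B/I_B` be their simple quotients (presented
abstractly by surjective algebra homomorphisms with kernels `I_A`, `I_B`). Assume that
every nonzero two-sided ideal of each of `A ⊗ B`, `(A/I_A) ⊗ B` and `A ⊗ (B/I_B)`
contains a nonzero elementary tensor, and that `Z(A/I_A) ⊗ Z(B/I_B)` is a field. Then
every two-sided ideal of `A ⊗[F] B` is admissible. -/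
theorem all_ideals_admissible_of_elementary_tensors_and_center_field
    (F A B A' B' : Type*) [Field F] [Ring A] [Algebra F A] [Ring B] [Algebra F B]
    [Ring A'] [Algebra F A'] [Ring B'] [Algebra F B']
    (IA : TwoSidedIdeal A) (IB : TwoSidedIdeal B)
    (hA : IsNearlySimpleWith IA) (hB : IsNearlySimpleWith IB)
    (qA : A →ₐ[F] A') (hqAsurj : Function.Surjective qA)
    (hkerA : ∀ x : A, qA x = 0 ↔ x ∈ IA)
    (qB : B →ₐ[F] B') (hqBsurj : Function.Surjective qB)
    (hkerB : ∀ y : B, qB y = 0 ↔ y ∈ IB)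
    (h1 : ∀ K : TwoSidedIdeal (A ⊗[F] B), K ≠ ⊥ →
      ∃ (a : A) (b : B), a ⊗ₜ[F] b ∈ K ∧ a ⊗ₜ[F] b ≠ 0)
    (h2 : ∀ K : TwoSidedIdeal (A' ⊗[F] B), K ≠ ⊥ →
      ∃ (a : A') (b : B), a ⊗ₜ[F] b ∈ K ∧ a ⊗ₜ[F] b ≠ 0)
    (h3 : ∀ K : TwoSidedIdeal (A ⊗[F] B'), K ≠ ⊥ →
      ∃ (a : A) (b : B'), a ⊗ₜ[F] b ∈ K ∧ a ⊗ₜ[F] b ≠ 0)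
    (h4 : IsField ((Subalgebra.center F A') ⊗[F] (Subalgebra.center F B'))) :
    ∀ J : TwoSidedIdeal (A ⊗[F] B), Admissible F IA IB J := by
  classical
  intro J
  by_cases hJbot : J = ⊥
  · exact Or.inl hJbot
  -- quotient algebras are simple and nontrivial
  have hsA' : ∀ K : TwoSidedIdeal A', K = ⊥ ∨ K = ⊤ :=
    quot_simple qA hqAsurj hkerA hA.2.2.1
  have hsB' : ∀ K : TwoSidedIdeal B', K = ⊥ ∨ K = ⊤ :=
    quot_simple qB hqBsurj hkerB hB.2.2.1
  haveI hntA' : Nontrivial A' := quot_nontrivial qA hkerA hA.2.1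
  haveI hntB' : Nontrivial B' := quot_nontrivial qB hkerB hB.2.1
  -- Step 1: `IA ⊗ IB ⊆ J`
  have hS1 : ∀ x ∈ IA, ∀ y ∈ IB, x ⊗ₜ[F] y ∈ J := by
    obtain ⟨a, b, habJ, habne⟩ := h1 J hJbot
    have ha0 : a ≠ 0 := fun h => habne (by rw [h, TensorProduct.zero_tmul])
    have hb0 : b ≠ 0 := fun h => habne (by rw [h, TensorProduct.tmul_zero])
    have hbT : b ∈ rightSlice J a := mem_rightSlice.2 habJ
    have hTne : rightSlice J a ≠ ⊥ := fun h => hb0 (by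
      rw [h, TwoSidedIdeal.mem_bot] at hbT; exact hbT)
    have hT := nonzero_ge hB.2.2.1 _ hTne
    intro x hx y hy
    have hay : a ⊗ₜ[F] y ∈ J := mem_rightSlice.1 (hT hy)
    have haS : a ∈ leftSlice J y := mem_leftSlice.2 hay
    have hSne : leftSlice J y ≠ ⊥ := fun h => ha0 (by
      rw [h, TwoSidedIdeal.mem_bot] at haS; exact haS)
    have hS := nonzero_ge hA.2.2.1 _ hSne
    exact mem_leftSlice.1 (hS hx)
  have hS1span : ∀ u ∈ tmulSpan F (IA : Set A) (IB : Set B), u ∈ J := fun u hu =>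
    tmulSpan_subset_tsi J hS1 hu
  -- the three quotient maps
  set ΦA : A ⊗[F] B →ₐ[F] A' ⊗[F] B := Algebra.TensorProduct.map qA (AlgHom.id F B) with hΦA
  set ΦB : A ⊗[F] B →ₐ[F] A ⊗[F] B' := Algebra.TensorProduct.map (AlgHom.id F A) qB with hΦB
  set Φ : A ⊗[F] B →ₐ[F] A' ⊗[F] B' := Algebra.TensorProduct.map qA qB with hΦ
  have hΦAsurj : Function.Surjective ΦA := algMap_surj qA (AlgHom.id F B) hqAsurj (fun x => ⟨x, rfl⟩)
  have hΦBsurj : Function.Surjective ΦB := algMap_surj (AlgHom.id F A) qB (fun x => ⟨x, rfl⟩) hqBsurj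
  have hΦsurj : Function.Surjective Φ := algMap_surj qA qB hqAsurj hqBsurj
  have hAid : (AlgHom.id F A).toLinearMap = LinearMap.id := rfl
  have hBid : (AlgHom.id F B).toLinearMap = LinearMap.id := rfl
  -- kernel membership translations
  have hkerΦA : ∀ u : A ⊗[F] B, ΦA u = 0 → u ∈ tmulSpan F (IA : Set A) (Set.univ : Set B) := by
    intro u hu
    refine ker_left_sub qA IA hqAsurj hkerA u ?_
    rw [← hBid, ← algMap_eq_linMap qA (AlgHom.id F B) u]
    exact hu
  have hkerΦB : ∀ u : A ⊗[F] B, ΦB u = 0 → u ∈ tmulSpan F (Set.univ : Set A) (IB : Set B) := by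
    intro u hu
    refine ker_right_sub qB IB hqBsurj hkerB u ?_
    rw [← hAid, ← algMap_eq_linMap (AlgHom.id F A) qB u]
    exact hu
  have hkerΦAB : ∀ u : A ⊗[F] B, ΦA u = 0 → ΦB u = 0 →
      u ∈ tmulSpan F (IA : Set A) (IB : Set B) := by
    intro u hu1 hu2
    refine ker_both qA qB IA IB hqAsurj hkerA hqBsurj hkerB u ?_ ?_
    · rw [← hBid, ← algMap_eq_linMap qA (AlgHom.id F B) u]; exact hu1
    · rw [← hAid, ← algMap_eq_linMap (AlgHom.id F A) qB u]; exact hu2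
  have hkerΦsum : ∀ u : A ⊗[F] B, Φ u = 0 →
      u ∈ tmulSpan F (IA : Set A) (Set.univ : Set B)
        ⊔ tmulSpan F (Set.univ : Set A) (IB : Set B) := by
    intro u hu
    refine ker_sum qA qB IA IB hqAsurj hkerA hqBsurj hkerB u ?_
    rw [← algMap_eq_linMap qA qB u]
    exact hu
  by_cases hP : ∀ j ∈ J, ΦA j = 0
  · by_cases hQ : ∀ j ∈ J, ΦB j = 0
    · -- J = IA ⊗ IB
      refine Or.inr (Or.inr (Or.inl ?_))
      apply subset_antisymm
      · intro u hu
        exact hkerΦAB u (hP u hu) (hQ u hu)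
      · intro u hu
        exact hS1span u hu
    · -- J = IA ⊗ B
      refine Or.inr (Or.inr (Or.inr (Or.inl ?_)))
      push_neg at hQ
      obtain ⟨j0, hj0J, hj0ne⟩ := hQ
      set J2 : TwoSidedIdeal (A ⊗[F] B') := tsiImage ΦB.toRingHom hΦBsurj J with hJ2
      have hJ2ne : J2 ≠ ⊥ := by
        intro h
        apply hj0ne
        have : ΦB j0 ∈ J2 := mem_tsiImage.2 ⟨j0, hj0J, rfl⟩
        rwa [h, TwoSidedIdeal.mem_bot] at this
      obtain ⟨a, b', habJ2, habne⟩ := h3 J2 hJ2ne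
      have ha0 : a ≠ 0 := fun h => habne (by rw [h, TensorProduct.zero_tmul])
      have hb'0 : b' ≠ 0 := fun h => habne (by rw [h, TensorProduct.tmul_zero])
      have haS : a ∈ leftSlice J2 b' := mem_leftSlice.2 habJ2
      have hSne : leftSlice J2 b' ≠ ⊥ := fun h => ha0 (by
        rw [h, TwoSidedIdeal.mem_bot] at haS; exact haS)
      have hSge := nonzero_ge hA.2.2.1 _ hSne
      have hIAB' : ∀ x ∈ IA, ∀ y' : B', x ⊗ₜ[F] y' ∈ J2 := by
        intro x hx y'
        have hxb' : x ⊗ₜ[F] b' ∈ J2 := mem_leftSlice.1 (hSge hx)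
        have hb'R : b' ∈ rightSlice J2 x := mem_rightSlice.2 hxb'
        have hRne : rightSlice J2 x ≠ ⊥ := fun h => hb'0 (by
          rw [h, TwoSidedIdeal.mem_bot] at hb'R; exact hb'R)
        rcases hsB' (rightSlice J2 x) with h | h
        · exact absurd h hRne
        · exact mem_rightSlice.1 (h ▸ TwoSidedIdeal.mem_top B')
      apply subset_antisymm
      · intro u hu
        exact hkerΦA u (hP u hu)
      · intro u hu
        refine tmulSpan_subset_tsi J ?_ hu
        intro x hx y _
        have hxyJ2 : ΦB (x ⊗ₜ[F] y) ∈ J2 := by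
          have : ΦB (x ⊗ₜ[F] y) = x ⊗ₜ[F] (qB y) := by
            rw [hΦB]; exact Algebra.TensorProduct.map_tmul _ _ _ _
          rw [this]
          exact hIAB' x hx (qB y)
        obtain ⟨j, hjJ, hjeq⟩ := mem_tsiImage.1 hxyJ2
        replace hjeq : ΦB j = ΦB (x ⊗ₜ[F] y) := hjeq
        have hd1 : ΦA (x ⊗ₜ[F] y - j) = 0 := by
          rw [map_sub, hP j hjJ, sub_zero, hΦA, Algebra.TensorProduct.map_tmul,
            (hkerA x).2 hx, TensorProduct.zero_tmul]
        have hd2 : ΦB (x ⊗ₜ[F] y - j) = 0 := by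
          rw [map_sub, hjeq, sub_self]
        have hdmem : x ⊗ₜ[F] y - j ∈ J := hS1span _ (hkerΦAB _ hd1 hd2)
        have := J.add_mem hdmem hjJ
        rwa [sub_add_cancel] at this
  · by_cases hQ : ∀ j ∈ J, ΦB j = 0
    · -- J = A ⊗ IB (symmetric)
      refine Or.inr (Or.inr (Or.inr (Or.inr (Or.inl ?_))))
      push_neg at hP
      obtain ⟨j0, hj0J, hj0ne⟩ := hP
      set J1 : TwoSidedIdeal (A' ⊗[F] B) := tsiImage ΦA.toRingHom hΦAsurj J with hJ1
      have hJ1ne : J1 ≠ ⊥ := by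
        intro h
        apply hj0ne
        have : ΦA j0 ∈ J1 := mem_tsiImage.2 ⟨j0, hj0J, rfl⟩
        rwa [h, TwoSidedIdeal.mem_bot] at this
      obtain ⟨a', b, habJ1, habne⟩ := h2 J1 hJ1ne
      have ha'0 : a' ≠ 0 := fun h => habne (by rw [h, TensorProduct.zero_tmul])
      have hb0 : b ≠ 0 := fun h => habne (by rw [h, TensorProduct.tmul_zero])
      have hbS : b ∈ rightSlice J1 a' := mem_rightSlice.2 habJ1
      have hSne : rightSlice J1 a' ≠ ⊥ := fun h => hb0 (by
        rw [h, TwoSidedIdeal.mem_bot] at hbS; exact hbS)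
      have hSge := nonzero_ge hB.2.2.1 _ hSne
      have hA'IB : ∀ x' : A', ∀ y ∈ IB, x' ⊗ₜ[F] y ∈ J1 := by
        intro x' y hy
        have ha'y : a' ⊗ₜ[F] y ∈ J1 := mem_rightSlice.1 (hSge hy)
        have ha'L : a' ∈ leftSlice J1 y := mem_leftSlice.2 ha'y
        have hLne : leftSlice J1 y ≠ ⊥ := fun h => ha'0 (by
          rw [h, TwoSidedIdeal.mem_bot] at ha'L; exact ha'L)
        rcases hsA' (leftSlice J1 y) with h | h
        · exact absurd h hLne
        · exact mem_leftSlice.1 (h ▸ TwoSidedIdeal.mem_top A')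
      apply subset_antisymm
      · intro u hu
        exact hkerΦB u (hQ u hu)
      · intro u hu
        refine tmulSpan_subset_tsi J ?_ hu
        intro x _ y hy
        have hxyJ1 : ΦA (x ⊗ₜ[F] y) ∈ J1 := by
          have : ΦA (x ⊗ₜ[F] y) = (qA x) ⊗ₜ[F] y := by
            rw [hΦA]; exact Algebra.TensorProduct.map_tmul _ _ _ _
          rw [this]
          exact hA'IB (qA x) y hy
        obtain ⟨j, hjJ, hjeq⟩ := mem_tsiImage.1 hxyJ1
        replace hjeq : ΦA j = ΦA (x ⊗ₜ[F] y) := hjeq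
        have hd1 : ΦA (x ⊗ₜ[F] y - j) = 0 := by
          rw [map_sub, hjeq, sub_self]
        have hd2 : ΦB (x ⊗ₜ[F] y - j) = 0 := by
          rw [map_sub, hQ j hjJ, sub_zero, hΦB, Algebra.TensorProduct.map_tmul,
            (hkerB y).2 hy, TensorProduct.tmul_zero]
        have hdmem : x ⊗ₜ[F] y - j ∈ J := hS1span _ (hkerΦAB _ hd1 hd2)
        have := J.add_mem hdmem hjJ
        rwa [sub_add_cancel] at this
    · -- J contains IA ⊗ B and A ⊗ IB
      push_neg at hP hQ
      -- (b) A ⊗ IB ⊆ J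
      have hbstep : ∀ x : A, ∀ y ∈ IB, x ⊗ₜ[F] y ∈ J := by
        obtain ⟨j0, hj0J, hj0ne⟩ := hP
        set J1 : TwoSidedIdeal (A' ⊗[F] B) := tsiImage ΦA.toRingHom hΦAsurj J with hJ1
        have hJ1ne : J1 ≠ ⊥ := by
          intro h
          apply hj0ne
          have : ΦA j0 ∈ J1 := mem_tsiImage.2 ⟨j0, hj0J, rfl⟩
          rwa [h, TwoSidedIdeal.mem_bot] at this
        obtain ⟨a', b, habJ1, habne⟩ := h2 J1 hJ1ne
        have ha'0 : a' ≠ 0 := fun h => habne (by rw [h, TensorProduct.zero_tmul])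
        have hb0 : b ≠ 0 := fun h => habne (by rw [h, TensorProduct.tmul_zero])
        -- 1 ⊗ b ∈ J1 since A' is simple
        have ha'L : a' ∈ leftSlice J1 b := mem_leftSlice.2 habJ1
        have hLne : leftSlice J1 b ≠ ⊥ := fun h => ha'0 (by
          rw [h, TwoSidedIdeal.mem_bot] at ha'L; exact ha'L)
        have h1b : (1 : A') ⊗ₜ[F] b ∈ J1 := by
          rcases hsA' (leftSlice J1 b) with h | h
          · exact absurd h hLne
          · exact mem_leftSlice.1 (h ▸ TwoSidedIdeal.mem_top A')
        -- 1 ⊗ y ∈ J1 for all y ∈ IB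
        have hbR : b ∈ rightSlice J1 (1 : A') := mem_rightSlice.2 h1b
        have hRne : rightSlice J1 (1 : A') ≠ ⊥ := fun h => hb0 (by
          rw [h, TwoSidedIdeal.mem_bot] at hbR; exact hbR)
        have hRge := nonzero_ge hB.2.2.1 _ hRne
        -- for y ∈ IB, get j ∈ J with 1 ⊗ y - j ∈ IA ⊗ B
        have hyJ : ∀ y ∈ IB, ∃ j ∈ J,
            (1 : A) ⊗ₜ[F] y - j ∈ tmulSpan F (IA : Set A) (Set.univ : Set B) := by
          intro y hy
          have h1y : (1 : A') ⊗ₜ[F] y ∈ J1 := mem_rightSlice.1 (hRge hy)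
          obtain ⟨j, hjJ, hjeq⟩ := mem_tsiImage.1 h1y
          replace hjeq : ΦA j = (1 : A') ⊗ₜ[F] y := hjeq
          refine ⟨j, hjJ, ?_⟩
          apply hkerΦA
          rw [map_sub, hjeq]
          simp [hΦA]
        -- products land in J
        have hprod : ∀ y' ∈ IB, ∀ y ∈ IB, (1 : A) ⊗ₜ[F] (y' * y) ∈ J := by
          intro y' hy' y hy
          obtain ⟨j, hjJ, hw⟩ := hyJ y hy
          have heq : (1 : A) ⊗ₜ[F] (y' * y)
              = ((1 : A) ⊗ₜ[F] y') * j + ((1 : A) ⊗ₜ[F] y') * ((1 : A) ⊗ₜ[F] y - j) := by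
            rw [← mul_add, add_sub_cancel, Algebra.TensorProduct.tmul_mul_tmul, one_mul]
          rw [heq]
          refine J.add_mem (J.mul_mem_left _ _ hjJ) ?_
          apply hS1span
          refine tmulSpan_apply_mem (LinearMap.mulLeft F ((1 : A) ⊗ₜ[F] y')) _ ?_ hw
          intro x hx u _
          have : (LinearMap.mulLeft F ((1 : A) ⊗ₜ[F] y')) (x ⊗ₜ[F] u)
              = x ⊗ₜ[F] (y' * u) := by
            rw [LinearMap.mulLeft_apply, Algebra.TensorProduct.tmul_mul_tmul, one_mul]
          rw [this]
          exact mem_tmulSpan_of hx (IB.mul_mem_right _ _ hy')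
        -- the right slice at 1 contains IB
        obtain ⟨y1, hy1, y2, hy2, hy12⟩ := hB.2.2.2
        have hyR : y1 * y2 ∈ rightSlice J (1 : A) :=
          mem_rightSlice.2 (hprod y1 hy1 y2 hy2)
        have hJRne : rightSlice J (1 : A) ≠ ⊥ := fun h => hy12 (by
          rw [h, TwoSidedIdeal.mem_bot] at hyR; exact hyR)
        have hJRge := nonzero_ge hB.2.2.1 _ hJRne
        intro x y hy
        have h1yJ : (1 : A) ⊗ₜ[F] y ∈ J := mem_rightSlice.1 (hJRge hy)
        have : x ⊗ₜ[F] y = (x ⊗ₜ[F] (1 : B)) * ((1 : A) ⊗ₜ[F] y) := by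
          rw [Algebra.TensorProduct.tmul_mul_tmul, mul_one, one_mul]
        rw [this]
        exact J.mul_mem_left _ _ h1yJ
      -- (c) IA ⊗ B ⊆ J (symmetric)
      have hcstep : ∀ x ∈ IA, ∀ y : B, x ⊗ₜ[F] y ∈ J := by
        obtain ⟨j0, hj0J, hj0ne⟩ := hQ
        set J2 : TwoSidedIdeal (A ⊗[F] B') := tsiImage ΦB.toRingHom hΦBsurj J with hJ2
        have hJ2ne : J2 ≠ ⊥ := by
          intro h
          apply hj0ne
          have : ΦB j0 ∈ J2 := mem_tsiImage.2 ⟨j0, hj0J, rfl⟩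
          rwa [h, TwoSidedIdeal.mem_bot] at this
        obtain ⟨a, b', habJ2, habne⟩ := h3 J2 hJ2ne
        have ha0 : a ≠ 0 := fun h => habne (by rw [h, TensorProduct.zero_tmul])
        have hb'0 : b' ≠ 0 := fun h => habne (by rw [h, TensorProduct.tmul_zero])
        have hb'R : b' ∈ rightSlice J2 a := mem_rightSlice.2 habJ2
        have hRne : rightSlice J2 a ≠ ⊥ := fun h => hb'0 (by
          rw [h, TwoSidedIdeal.mem_bot] at hb'R; exact hb'R)
        have ha1 : a ⊗ₜ[F] (1 : B') ∈ J2 := by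
          rcases hsB' (rightSlice J2 a) with h | h
          · exact absurd h hRne
          · exact mem_rightSlice.1 (h ▸ TwoSidedIdeal.mem_top B')
        have haL : a ∈ leftSlice J2 (1 : B') := mem_leftSlice.2 ha1
        have hLne : leftSlice J2 (1 : B') ≠ ⊥ := fun h => ha0 (by
          rw [h, TwoSidedIdeal.mem_bot] at haL; exact haL)
        have hLge := nonzero_ge hA.2.2.1 _ hLne
        have hxJ : ∀ x ∈ IA, ∃ j ∈ J,
            x ⊗ₜ[F] (1 : B) - j ∈ tmulSpan F (Set.univ : Set A) (IB : Set B) := by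
          intro x hx
          have hx1 : x ⊗ₜ[F] (1 : B') ∈ J2 := mem_leftSlice.1 (hLge hx)
          obtain ⟨j, hjJ, hjeq⟩ := mem_tsiImage.1 hx1
          replace hjeq : ΦB j = x ⊗ₜ[F] (1 : B') := hjeq
          refine ⟨j, hjJ, ?_⟩
          apply hkerΦB
          rw [map_sub, hjeq]
          simp [hΦB]
        have hprod : ∀ x' ∈ IA, ∀ x ∈ IA, (x' * x) ⊗ₜ[F] (1 : B) ∈ J := by
          intro x' hx' x hx
          obtain ⟨j, hjJ, hw⟩ := hxJ x hx
          have heq : (x' * x) ⊗ₜ[F] (1 : B)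
              = (x' ⊗ₜ[F] (1 : B)) * j + (x' ⊗ₜ[F] (1 : B)) * (x ⊗ₜ[F] (1 : B) - j) := by
            rw [← mul_add, add_sub_cancel, Algebra.TensorProduct.tmul_mul_tmul, one_mul]
          rw [heq]
          refine J.add_mem (J.mul_mem_left _ _ hjJ) ?_
          apply hS1span
          refine tmulSpan_apply_mem (LinearMap.mulLeft F (x' ⊗ₜ[F] (1 : B))) _ ?_ hw
          intro u _ v hv
          have : (LinearMap.mulLeft F (x' ⊗ₜ[F] (1 : B))) (u ⊗ₜ[F] v)
              = (x' * u) ⊗ₜ[F] v := by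
            rw [LinearMap.mulLeft_apply, Algebra.TensorProduct.tmul_mul_tmul, one_mul]
          rw [this]
          exact mem_tmulSpan_of (IA.mul_mem_right _ _ hx') hv
        obtain ⟨x1, hx1, x2, hx2, hx12⟩ := hA.2.2.2
        have hxL : x1 * x2 ∈ leftSlice J (1 : B) :=
          mem_leftSlice.2 (hprod x1 hx1 x2 hx2)
        have hJLne : leftSlice J (1 : B) ≠ ⊥ := fun h => hx12 (by
          rw [h, TwoSidedIdeal.mem_bot] at hxL; exact hxL)
        have hJLge := nonzero_ge hA.2.2.1 _ hJLne
        intro x hx y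
        have hx1J : x ⊗ₜ[F] (1 : B) ∈ J := mem_leftSlice.1 (hJLge hx)
        have : x ⊗ₜ[F] y = (x ⊗ₜ[F] (1 : B)) * ((1 : A) ⊗ₜ[F] y) := by
          rw [Algebra.TensorProduct.tmul_mul_tmul, mul_one, one_mul]
        rw [this]
        exact J.mul_mem_right _ _ hx1J
      -- sup of the two spans is contained in J
      have hsupJ : ∀ u ∈ tmulSpan F (IA : Set A) (Set.univ : Set B)
          ⊔ tmulSpan F (Set.univ : Set A) (IB : Set B), u ∈ J := by
        intro u hu
        obtain ⟨x, hx, y, hy, rfl⟩ := Submodule.mem_sup.1 hu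
        refine J.add_mem ?_ ?_
        · exact tmulSpan_subset_tsi J (fun x' hx' y' _ => hcstep x' hx' y') hx
        · exact tmulSpan_subset_tsi J (fun x' _ y' hy' => hbstep x' y' hy') hy
      by_cases hPQ : ∀ j ∈ J, Φ j = 0
      · -- J = IA ⊗ B + A ⊗ IB
        refine Or.inr (Or.inr (Or.inr (Or.inr (Or.inr ?_))))
        apply subset_antisymm
        · intro u hu
          exact hkerΦsum u (hPQ u hu)
        · intro u hu
          exact hsupJ u hu
      · -- J = ⊤
        refine Or.inr (Or.inl ?_)
        push_neg at hPQ
        obtain ⟨j0, hj0J, hj0ne⟩ := hPQ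
        set J' : TwoSidedIdeal (A' ⊗[F] B') := tsiImage Φ.toRingHom hΦsurj J with hJ'
        have hJ'ne : J' ≠ ⊥ := by
          intro h
          apply hj0ne
          have : Φ j0 ∈ J' := mem_tsiImage.2 ⟨j0, hj0J, rfl⟩
          rwa [h, TwoSidedIdeal.mem_bot] at this
        have hJ'top : J' = ⊤ := by
          rcases tensor_simple hsA' hsB' h4 J' with h | h
          · exact absurd h hJ'ne
          · exact h
        rw [eq_top_iff]
        intro z _
        have hzJ' : Φ z ∈ J' := hJ'top ▸ TwoSidedIdeal.mem_top _
        obtain ⟨j, hjJ, hjeq⟩ := mem_tsiImage.1 hzJ'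
        replace hjeq : Φ j = Φ z := hjeq
        have hd : Φ (z - j) = 0 := by rw [map_sub, hjeq, sub_self]
        have hdmem : z - j ∈ J := hsupJ _ (hkerΦsum _ hd)
        have := J.add_mem hdmem hjJ
        rwa [sub_add_cancel] at this
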